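/- Consider the exact stochastic hypergraph SIS process with concave infection function f (f(0)=0, f nonnegative), infection strength β, recovery rate δ, and each node initially infected independently with probability i₀. Then ℙ(∑_{i=1}^n X_i(t) > 0) ≤ n · i₀ · exp((β f(1) λ(W) − δ) t) for all t ≥ 0. In particular, if β f(1) λ(W)/δ < 1, the disease vanishes at an exponential rate. -/

import Mathlib

open MeasureTheory ProbabilityTheory Filter Finset

/-- The hypergraph SIS infection rate `λ_i(x) = β ∑_h I_{ih} f(∑_j I_{jh} x_j)`. -/
noncomputable def infRate (n m : ℕ) (Inc : Fin n → Fin m → ℕ) (β : ℝ) (f : ℕ → ℝ)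
    (x : Fin n → ℕ) (i : Fin n) : ℝ :=
  β * ∑ h : Fin m, (Inc i h : ℝ) * f (∑ j, Inc j h * x j)

open Matrix

lemma flin_aux (f : ℕ → ℝ) (hconc : ∀ k : ℕ, 1 ≤ k → f (k + 1) - f k ≤ f k - f (k - 1))
    (hf0 : f 0 = 0) : ∀ k : ℕ, f k ≤ f 1 * k := by
  have hstep : ∀ k : ℕ, 1 ≤ k → f (k + 1) - f k ≤ f 1 := by
    intro k hk
    induction k with
    | zero => omega
    | succ k ih =>
      rcases Nat.eq_zero_or_pos k with h0 | hpos
      · subst h0; have := hconc 1 le_rfl; simp only [Nat.sub_self] at this; linarith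
      · have h1 := hconc (k + 1) (by omega)
        have h2 := ih hpos
        simp only [Nat.add_sub_cancel] at h1
        linarith
  intro k
  induction k with
  | zero => simp [hf0]
  | succ k ih =>
    rcases Nat.eq_zero_or_pos k with h0 | hpos
    · subst h0; simp
    · have := hstep k hpos
      push_cast
      linarith

lemma rayleigh_bound {n : ℕ} (W : Matrix (Fin n) (Fin n) ℝ) (hW : W.IsHermitian)
    (lam : ℝ) (hlam : ∀ j, hW.eigenvalues j ≤ lam) (y : Fin n → ℝ) :
    y ⬝ᵥ W.mulVec y ≤ lam * (y ⬝ᵥ y) := by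
  classical
  set b := hW.eigenvectorBasis with hb
  set Y : EuclideanSpace ℝ (Fin n) := WithLp.toLp 2 y with hY
  set Z : EuclideanSpace ℝ (Fin n) := WithLp.toLp 2 (W.mulVec y) with hZ
  have hinner : ∀ u v : EuclideanSpace ℝ (Fin n),
      (inner ℝ u v : ℝ) = (u : Fin n → ℝ) ⬝ᵥ (v : Fin n → ℝ) := by
    intro u v
    simp [PiLp.inner_apply, dotProduct, mul_comm]
  have hsym : ∀ x : Fin n → ℝ, x ⬝ᵥ W.mulVec y = W.mulVec x ⬝ᵥ y := by
    intro x
    rw [dotProduct_mulVec, ← Matrix.mulVec_transpose]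
    congr 1
    rw [show Wᵀ = W from by simpa [Matrix.conjTranspose_eq_transpose_of_trivial] using hW.eq]
  have key : ∀ j, (inner ℝ (b j) Z : ℝ) = hW.eigenvalues j * ((b j : Fin n → ℝ) ⬝ᵥ y) := by
    intro j
    rw [hinner]
    have hm : W.mulVec (b j : Fin n → ℝ) = hW.eigenvalues j • (b j : Fin n → ℝ) :=
      hW.mulVec_eigenvectorBasis j
    show (b j : Fin n → ℝ) ⬝ᵥ W.mulVec y = _
    rw [hsym, hm, smul_dotProduct, smul_eq_mul]
  have hexp := b.sum_inner_mul_inner Y Z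
  have hYY := b.sum_inner_mul_inner Y Y
  have hYbj : ∀ j, (inner ℝ Y (b j) : ℝ) = (b j : Fin n → ℝ) ⬝ᵥ y := by
    intro j
    rw [hinner]
    exact dotProduct_comm _ _
  have hbjY : ∀ j, (inner ℝ (b j) Y : ℝ) = (b j : Fin n → ℝ) ⬝ᵥ y := fun j => hinner _ _
  calc y ⬝ᵥ W.mulVec y = (inner ℝ Y Z : ℝ) := (hinner Y Z).symm
    _ = ∑ j, (inner ℝ Y (b j) : ℝ) * inner ℝ (b j) Z := hexp.symm
    _ = ∑ j, hW.eigenvalues j * ((b j : Fin n → ℝ) ⬝ᵥ y) ^ 2 := by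
        refine Finset.sum_congr rfl fun j _ => ?_
        rw [key j, hYbj j]; ring
    _ ≤ ∑ j, lam * ((b j : Fin n → ℝ) ⬝ᵥ y) ^ 2 := by
        refine Finset.sum_le_sum fun j _ => ?_
        exact mul_le_mul_of_nonneg_right (hlam j) (sq_nonneg _)
    _ = lam * ∑ j, (inner ℝ Y (b j) : ℝ) * inner ℝ (b j) Y := by
        rw [Finset.mul_sum]
        refine Finset.sum_congr rfl fun j _ => ?_
        rw [hYbj j, hbjY j]; ring
    _ = lam * (y ⬝ᵥ y) := by rw [hYY, hinner]

/-- Exponential decay for the exact stochastic hypergraph SIS process with concave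
infection function: if each node is initially infected independently with probability
`i₀`, then `ℙ(∑_i X_i(t) > 0) ≤ n i₀ exp((β f(1) λ(W) − δ) t)` for all `t ≥ 0`.
The dynamics is encoded via the Kolmogorov forward equations for the means. -/
theorem exact_process_exponential_decay
    (n m : ℕ) (hn : 0 < n) (Inc : Fin n → Fin m → ℕ)
    (hInc : ∀ i h, Inc i h = 0 ∨ Inc i h = 1)
    (β δ : ℝ) (hβ : 0 < β) (hδ : 0 < δ)
    (f : ℕ → ℝ)
    (hconc : ∀ k : ℕ, 1 ≤ k → f (k + 1) - f k ≤ f k - f (k - 1))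
    (hf0 : f 0 = 0) (hnonneg : ∀ k, 0 ≤ f k)
    (W : Matrix (Fin n) (Fin n) ℝ)
    (hWdef : ∀ i j, W i j = ((∑ h, Inc i h * Inc j h : ℕ) : ℝ))
    (hW : W.IsHermitian)
    (Ω : Type*) [MeasurableSpace Ω] (μ : Measure Ω) [IsProbabilityMeasure μ]
    (X : ℝ → Ω → Fin n → ℕ)
    (hmeas : ∀ t, Measurable (X t))
    (hval : ∀ t ω i, X t ω i = 0 ∨ X t ω i = 1)
    (i₀ : ℝ) (hi₀ : i₀ ∈ Set.Icc (0 : ℝ) 1)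
    (hinit : ∀ i, μ {ω | X 0 ω i = 1} = ENNReal.ofReal i₀)
    (hindep : iIndepFun (fun i ω => X 0 ω i) μ)
    (hdyn : ∀ i : Fin n, ∀ t : ℝ, 0 ≤ t →
      HasDerivAt (fun s => ∫ ω, ((X s ω i : ℝ)) ∂μ)
        (∫ ω, ((1 - (X t ω i : ℝ)) * infRate n m Inc β f (X t ω) i
            - δ * (X t ω i : ℝ)) ∂μ) t) :
    ∀ t : ℝ, 0 ≤ t →
      (μ {ω | 0 < ∑ i, X t ω i}).toReal ≤
        (n : ℝ) * i₀ * Real.exp ((β * f 1 *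
          (Finset.univ.sup'
            (by simpa using Finset.univ_nonempty_iff.mpr (Fin.pos_iff_nonempty.mp hn))
            hW.eigenvalues) - δ) * t) := by
  classical
  obtain ⟨hi0, hi1⟩ := hi₀
  have hf1 : 0 ≤ f 1 := hnonneg 1
  have hflin := flin_aux f hconc hf0
  -- value bounds
  have hX01 : ∀ s ω i, X s ω i ≤ 1 := by
    intro s ω i; rcases hval s ω i with h | h <;> simp [h]
  -- measurability / integrability machinery
  have hFmeas : ∀ (s : ℝ) (F : (Fin n → ℕ) → ℝ), Measurable (fun ω => F (X s ω)) :=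
    fun s F => (measurable_of_countable F).comp (hmeas s)
  have hint : ∀ (s : ℝ) (F : (Fin n → ℕ) → ℝ) (C : ℝ),
      (∀ x : Fin n → ℕ, (∀ j, x j ≤ 1) → |F x| ≤ C) →
      Integrable (fun ω => F (X s ω)) μ := by
    intro s F C hC
    exact (integrable_const C).mono' (hFmeas s F).aestronglyMeasurable
      (ae_of_all μ fun ω => by simpa using hC (X s ω) (hX01 s ω))
  have hXiint : ∀ (s : ℝ) (i : Fin n), Integrable (fun ω => ((X s ω i : ℝ))) μ := by
    intro s i
    exact hint s (fun x => (x i : ℝ)) 1 (fun x hx => by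
      show |(x i : ℝ)| ≤ 1
      rw [abs_of_nonneg (Nat.cast_nonneg _)]; exact_mod_cast hx i)
  -- the means
  set y : Fin n → ℝ → ℝ := fun i s => ∫ ω, ((X s ω i : ℝ)) ∂μ with hy
  have hy0 : ∀ i s, 0 ≤ y i s := fun i s =>
    integral_nonneg fun ω => Nat.cast_nonneg _
  have hy1 : ∀ i s, y i s ≤ 1 := by
    intro i s
    have := integral_mono (hXiint s i) (integrable_const (1 : ℝ))
      (fun ω => Nat.cast_le_one.mpr (hX01 s ω i))
    simpa using this
  -- initial condition
  have hyinit : ∀ i, y i 0 = i₀ := by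
    intro i
    have hset : MeasurableSet {ω | X 0 ω i = 1} :=
      ((measurable_pi_apply i).comp (hmeas 0)) (measurableSet_singleton 1)
    have heq : (fun ω => ((X 0 ω i : ℝ))) =
        Set.indicator {ω | X 0 ω i = 1} (fun _ => (1 : ℝ)) := by
      funext ω
      rcases hval 0 ω i with h | h <;>
        simp [h, Set.indicator_apply, Set.mem_setOf_eq]
    show (∫ ω, ((X 0 ω i : ℝ)) ∂μ) = i₀
    rw [heq, integral_indicator_const _ hset, measureReal_def, hinit i, smul_eq_mul, mul_one,
      ENNReal.toReal_ofReal hi0]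
  -- the drift terms
  set D : Fin n → ℝ → ℝ := fun i s =>
    ∫ ω, ((1 - (X s ω i : ℝ)) * infRate n m Inc β f (X s ω) i - δ * (X s ω i : ℝ)) ∂μ
    with hD
  -- pointwise inequality
  have hInc01 : ∀ i h, (0 : ℝ) ≤ (Inc i h : ℝ) ∧ (Inc i h : ℝ) ≤ 1 := by
    intro i h; rcases hInc i h with h0 | h0 <;> simp [h0]
  have hrate_nonneg : ∀ (x : Fin n → ℕ) (i : Fin n), 0 ≤ infRate n m Inc β f x i := by
    intro x i
    refine mul_nonneg hβ.le (Finset.sum_nonneg fun h _ => mul_nonneg (Nat.cast_nonneg _) (hnonneg _))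
  have hrate_le : ∀ (x : Fin n → ℕ) (i : Fin n), (∀ j, x j ≤ 1) →
      infRate n m Inc β f x i ≤ β * f 1 * (∑ j, W i j * (x j : ℝ)) := by
    intro x i hx
    have key : ∀ h : Fin m, (Inc i h : ℝ) * f (∑ j, Inc j h * x j) ≤
        ∑ j, f 1 * ((Inc i h : ℝ) * (Inc j h : ℝ) * (x j : ℝ)) := by
      intro h
      rcases hInc i h with h0 | h0
      · simp [h0]
      · have h1 : f (∑ j, Inc j h * x j) ≤ f 1 * ((∑ j, Inc j h * x j : ℕ) : ℝ) := hflin _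
        have h2 : ((∑ j, Inc j h * x j : ℕ) : ℝ) = ∑ j, (Inc j h : ℝ) * (x j : ℝ) := by
          push_cast; rfl
        rw [h0, Nat.cast_one]
        calc (1 : ℝ) * f (∑ j, Inc j h * x j) = f (∑ j, Inc j h * x j) := one_mul _
          _ ≤ f 1 * ∑ j, (Inc j h : ℝ) * (x j : ℝ) := by rw [← h2]; exact h1
          _ = ∑ j, f 1 * ((1 : ℝ) * (Inc j h : ℝ) * (x j : ℝ)) := by
              rw [Finset.mul_sum]
              exact Finset.sum_congr rfl fun j _ => by ring
    have hsum : ∑ h : Fin m, (Inc i h : ℝ) * f (∑ j, Inc j h * x j) ≤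
        f 1 * ∑ j, W i j * (x j : ℝ) := by
      calc ∑ h : Fin m, (Inc i h : ℝ) * f (∑ j, Inc j h * x j)
          ≤ ∑ h : Fin m, ∑ j, f 1 * ((Inc i h : ℝ) * (Inc j h : ℝ) * (x j : ℝ)) :=
            Finset.sum_le_sum fun h _ => key h
        _ = ∑ j, ∑ h : Fin m, f 1 * ((Inc i h : ℝ) * (Inc j h : ℝ) * (x j : ℝ)) :=
            Finset.sum_comm
        _ = f 1 * ∑ j, W i j * (x j : ℝ) := by
            rw [Finset.mul_sum]
            refine Finset.sum_congr rfl fun j _ => ?_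
            rw [hWdef i j]
            push_cast
            rw [Finset.sum_mul, Finset.mul_sum]
    calc infRate n m Inc β f x i
        = β * ∑ h : Fin m, (Inc i h : ℝ) * f (∑ j, Inc j h * x j) := rfl
      _ ≤ β * (f 1 * ∑ j, W i j * (x j : ℝ)) := by
          exact mul_le_mul_of_nonneg_left hsum hβ.le
      _ = β * f 1 * (∑ j, W i j * (x j : ℝ)) := by ring
  have hpt : ∀ (i : Fin n) (x : Fin n → ℕ), (∀ j, x j ≤ 1) →
      (1 - (x i : ℝ)) * infRate n m Inc β f x i - δ * (x i : ℝ)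
        ≤ β * f 1 * (∑ j, W i j * (x j : ℝ)) - δ * (x i : ℝ) := by
    intro i x hx
    have hxi1 : (x i : ℝ) ≤ 1 := by exact_mod_cast hx i
    have h1 : (1 - (x i : ℝ)) * infRate n m Inc β f x i ≤ infRate n m Inc β f x i :=
      mul_le_of_le_one_left (hrate_nonneg x i) (by linarith [Nat.cast_nonneg (x i) (α := ℝ)])
    have h2 := hrate_le x i hx
    linarith
  -- integrability of the drift integrand
  have hDint : ∀ (i : Fin n) (s : ℝ),
      Integrable (fun ω => (1 - (X s ω i : ℝ)) * infRate n m Inc β f (X s ω) i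
        - δ * (X s ω i : ℝ)) μ := by
    intro i s
    refine hint s (fun x => (1 - (x i : ℝ)) * infRate n m Inc β f x i - δ * (x i : ℝ))
      (β * (m * (f 1 * n)) + δ) ?_
    intro x hx
    have hxi1 : (x i : ℝ) ≤ 1 := by exact_mod_cast hx i
    have hxi0 : (0 : ℝ) ≤ (x i : ℝ) := Nat.cast_nonneg _
    have hr0 := hrate_nonneg x i
    have hr1 : infRate n m Inc β f x i ≤ β * (m * (f 1 * n)) := by
      have hterm : ∀ h : Fin m, (Inc i h : ℝ) * f (∑ j, Inc j h * x j) ≤ f 1 * n := by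
        intro h
        have harg : (∑ j, Inc j h * x j) ≤ n := by
          calc (∑ j, Inc j h * x j) ≤ ∑ j : Fin n, 1 := by
                refine Finset.sum_le_sum fun j _ => ?_
                rcases hInc j h with h0 | h0 <;> simp [h0, hx j]
            _ = n := by simp
        have h1 : f (∑ j, Inc j h * x j) ≤ f 1 * n := by
          calc f (∑ j, Inc j h * x j) ≤ f 1 * ((∑ j, Inc j h * x j : ℕ) : ℝ) := hflin _
            _ ≤ f 1 * n := by
                refine mul_le_mul_of_nonneg_left ?_ hf1
                exact_mod_cast harg
        calc (Inc i h : ℝ) * f (∑ j, Inc j h * x j) ≤ 1 * f (∑ j, Inc j h * x j) := by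
              refine mul_le_mul_of_nonneg_right (hInc01 i h).2 (hnonneg _)
          _ = f (∑ j, Inc j h * x j) := one_mul _
          _ ≤ f 1 * n := h1
      calc infRate n m Inc β f x i
          = β * ∑ h : Fin m, (Inc i h : ℝ) * f (∑ j, Inc j h * x j) := rfl
        _ ≤ β * ∑ h : Fin m, f 1 * n := by
            exact mul_le_mul_of_nonneg_left (Finset.sum_le_sum fun h _ => hterm h) hβ.le
        _ = β * (m * (f 1 * n)) := by rw [Finset.sum_const]; simp [mul_assoc]
    have hB : 0 ≤ β * (↑m * (f 1 * ↑n)) := by positivity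
    have har : (1 - (x i : ℝ)) * infRate n m Inc β f x i ≤ infRate n m Inc β f x i :=
      mul_le_of_le_one_left hr0 (by linarith)
    have har0 : 0 ≤ (1 - (x i : ℝ)) * infRate n m Inc β f x i :=
      mul_nonneg (by linarith) hr0
    show |(1 - (x i : ℝ)) * infRate n m Inc β f x i - δ * (x i : ℝ)| ≤ _
    rw [abs_le]
    refine ⟨by nlinarith, by nlinarith⟩
  -- derivative upper bound after integration
  have hderiv_le : ∀ (i : Fin n) (s : ℝ),
      D i s ≤ β * f 1 * (∑ j, W i j * y j s) - δ * y i s := by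
    intro i s
    have hR : Integrable (fun ω => β * f 1 * (∑ j, W i j * (X s ω j : ℝ))
        - δ * (X s ω i : ℝ)) μ := by
      refine Integrable.sub ?_ ((hXiint s i).const_mul δ)
      refine Integrable.const_mul ?_ (β * f 1)
      exact integrable_finset_sum _ fun j _ => (hXiint s j).const_mul (W i j)
    have hmono := integral_mono (hDint i s) hR
      (fun ω => hpt i (X s ω) (hX01 s ω))
    have hRval : ∫ ω, (β * f 1 * (∑ j, W i j * (X s ω j : ℝ)) - δ * (X s ω i : ℝ)) ∂μ
        = β * f 1 * (∑ j, W i j * y j s) - δ * y i s := by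
      rw [integral_sub (by
          refine Integrable.const_mul ?_ (β * f 1)
          exact integrable_finset_sum _ fun j _ => (hXiint s j).const_mul (W i j))
        ((hXiint s i).const_mul δ)]
      rw [integral_const_mul, integral_const_mul,
        integral_finset_sum _ fun j _ => (hXiint s j).const_mul (W i j)]
      simp_rw [integral_const_mul]; rfl
    rw [hRval] at hmono
    exact hmono
  -- Lyapunov function
  set lam := Finset.univ.sup'
      (by simpa using Finset.univ_nonempty_iff.mpr (Fin.pos_iff_nonempty.mp hn) :
        (Finset.univ : Finset (Fin n)).Nonempty) hW.eigenvalues with hlamdef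
  have hlam : ∀ j, hW.eigenvalues j ≤ lam := fun j =>
    Finset.le_sup' hW.eigenvalues (Finset.mem_univ j)
  set K : ℝ := β * f 1 * lam - δ with hK
  set V : ℝ → ℝ := fun s => ∑ i, (y i s) ^ 2 with hV
  have hyD : ∀ (i : Fin n) (s : ℝ), 0 ≤ s → HasDerivAt (y i) (D i s) s :=
    fun i s hs => hdyn i s hs
  have hVderiv : ∀ s : ℝ, 0 ≤ s → HasDerivAt V (∑ i, 2 * y i s * D i s) s := by
    intro s hs
    rw [hV]
    refine HasDerivAt.fun_sum fun i _ => ?_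
    have h2 := (hyD i s hs).fun_pow 2
    simpa using h2
  have hVbound : ∀ s : ℝ, 0 ≤ s → (∑ i, 2 * y i s * D i s) ≤ 2 * K * V s := by
    intro s hs
    have step1 : (∑ i, 2 * y i s * D i s) ≤
        ∑ i, 2 * y i s * (β * f 1 * (∑ j, W i j * y j s) - δ * y i s) := by
      refine Finset.sum_le_sum fun i _ => ?_
      exact mul_le_mul_of_nonneg_left (hderiv_le i s)
        (by positivity)
    set Ys : Fin n → ℝ := fun j => y j s with hYs
    have hmv : ∀ i, W.mulVec Ys i = ∑ j, W i j * y j s := by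
      intro i; simp [Matrix.mulVec, dotProduct, hYs]
    have step2 : ∑ i, 2 * y i s * (β * f 1 * (∑ j, W i j * y j s) - δ * y i s)
        = 2 * (β * f 1) * (Ys ⬝ᵥ W.mulVec Ys) - 2 * δ * ∑ i, (y i s) ^ 2 := by
      simp only [dotProduct]
      rw [Finset.mul_sum, Finset.mul_sum, ← Finset.sum_sub_distrib]
      refine Finset.sum_congr rfl fun i _ => ?_
      rw [hmv i]
      show 2 * y i s * (β * f 1 * (∑ j, W i j * y j s) - δ * y i s) = _
      have : Ys i = y i s := rfl
      rw [this]
      ring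
    have step3 : Ys ⬝ᵥ W.mulVec Ys ≤ lam * (Ys ⬝ᵥ Ys) :=
      rayleigh_bound W hW lam hlam _
    have hdot : (Ys ⬝ᵥ Ys) = V s := by
      simp [dotProduct, hYs, hV, sq]
    have hVnn : 0 ≤ V s := Finset.sum_nonneg fun i _ => sq_nonneg _
    calc (∑ i, 2 * y i s * D i s) ≤ _ := step1
      _ = 2 * (β * f 1) * (Ys ⬝ᵥ W.mulVec Ys)
          - 2 * δ * V s := by rw [step2]
      _ ≤ 2 * (β * f 1) * (lam * V s) - 2 * δ * V s := by
          have : 0 ≤ 2 * (β * f 1) := by positivity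
          rw [← hdot]
          nlinarith [step3]
      _ = 2 * K * V s := by rw [hK]; ring
  -- Gronwall
  intro t ht
  have hgron : V t ≤ V 0 * Real.exp (2 * K * t) := by
    have := le_gronwallBound_of_liminf_deriv_right_le (f := V)
      (f' := fun s => ∑ i, 2 * y i s * D i s) (δ := V 0) (K := 2 * K) (ε := 0)
      (a := 0) (b := t)
      (fun s hs => ((hVderiv s hs.1).continuousAt.continuousWithinAt))
      (fun s hs r hr => ((hVderiv s hs.1).hasDerivWithinAt.liminf_right_slope_le hr))
      le_rfl
      (fun s hs => by simpa using hVbound s hs.1)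
      t (Set.mem_Icc.mpr ⟨ht, le_rfl⟩)
    simpa [gronwallBound_ε0] using this
  have hV0 : V 0 = n * i₀ ^ 2 := by
    simp [hV, hyinit]
  -- probability bound
  set A := {ω | 0 < ∑ i, X t ω i} with hA
  have hAmeas : MeasurableSet A := by
    have : A = (X t) ⁻¹' {x | 0 < ∑ i, x i} := rfl
    rw [this]
    exact hmeas t ((Set.to_countable _).measurableSet)
  have hPle : (μ A).toReal ≤ ∑ i, y i t := by
    have h1 : (μ A).toReal = ∫ ω, A.indicator (fun _ => (1 : ℝ)) ω ∂μ := by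
      rw [integral_indicator_const _ hAmeas]; simp; rfl
    have h2 : ∫ ω, A.indicator (fun _ => (1 : ℝ)) ω ∂μ ≤ ∫ ω, ∑ i, ((X t ω i : ℝ)) ∂μ := by
      refine integral_mono ((integrable_const (1:ℝ)).indicator hAmeas)
        (integrable_finset_sum _ fun i _ => hXiint t i) ?_
      intro ω
      by_cases hω : ω ∈ A
      · have h3 : 1 ≤ ∑ i, X t ω i := hω
        have h4 : ((1 : ℕ) : ℝ) ≤ ((∑ i, X t ω i : ℕ) : ℝ) := Nat.cast_le.mpr h3
        push_cast at h4
        simpa [Set.indicator_of_mem hω] using h4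
      · simp only [Set.indicator_of_notMem hω]
        exact Finset.sum_nonneg fun i _ => Nat.cast_nonneg _
    have h3 : ∫ ω, ∑ i, ((X t ω i : ℝ)) ∂μ = ∑ i, y i t :=
      integral_finset_sum _ fun i _ => hXiint t i
    rw [h1]; rw [h3] at h2; exact h2
  -- Cauchy-Schwarz and conclusion
  have hsum_nn : 0 ≤ ∑ i, y i t := Finset.sum_nonneg fun i _ => hy0 i t
  have hcs : (∑ i, y i t) ^ 2 ≤ n * V t := by
    have := sq_sum_le_card_mul_sum_sq (s := (Finset.univ : Finset (Fin n)))
      (f := fun i => y i t)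
    simpa [hV] using this
  have hrhs_nn : 0 ≤ (n : ℝ) * i₀ * Real.exp (K * t) := by positivity
  have hfinal : (∑ i, y i t) ≤ (n : ℝ) * i₀ * Real.exp (K * t) := by
    have hsq : (∑ i, y i t) ^ 2 ≤ ((n : ℝ) * i₀ * Real.exp (K * t)) ^ 2 := by
      have hexp2 : Real.exp (2 * K * t) = Real.exp (K * t) ^ 2 := by
        rw [sq, ← Real.exp_add]; ring_nf
      calc (∑ i, y i t) ^ 2 ≤ n * V t := hcs
        _ ≤ n * (V 0 * Real.exp (2 * K * t)) := by
            refine mul_le_mul_of_nonneg_left hgron (Nat.cast_nonneg n)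
        _ = ((n : ℝ) * i₀ * Real.exp (K * t)) ^ 2 := by
            rw [hV0, hexp2]; ring
    exact (pow_le_pow_iff_left₀ hsum_nn hrhs_nn (by norm_num)).mp hsq
  calc (μ A).toReal ≤ ∑ i, y i t := hPle
    _ ≤ (n : ℝ) * i₀ * Real.exp (K * t) := hfinal
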